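/- Let 1 < p < N, let Ω be a bounded domain of ℝ^N with diameter D, let κ > 0 and β₀ > β ≥ 1. Let ω be a nonnegative bounded Borel measure on Ω such that W_{1,p}^{2D}[ω](x) < ∞ for a.e. x ∈ Ω. Then for every ε > 0 and every integer n ≥ 1 there exists a constant c_{ε,n} > 0 (depending on ε, n, N, p, β, β₀, κ, D) such that ( n + κ·W_{1,p}^{2D}[ n·(1_Ω dx + ω) ](x) )^β ≤ c_{ε,n} + ε ( W_{1,p}^{2D}[ω](x) )^{β₀} for a.e. x ∈ Ω, where n·(1_Ω dx + ω) denotes n times the sum of Lebesgue measure restricted to Ω and the measure ω. -/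

import Mathlib

open MeasureTheory Metric Set
open scoped ENNReal

/-- Truncated Wolff potential `W_{1,p}^R[ω](x) = ∫_0^R (r^{p-N} ω(B(x,r)))^{1/(p-1)} dr/r`. -/
noncomputable def wolffPotential (N : ℕ) (p R : ℝ)
    (ω : Measure (EuclideanSpace ℝ (Fin N))) (x : EuclideanSpace ℝ (Fin N)) : ℝ≥0∞ :=
  ∫⁻ r in Ioo (0:ℝ) R,
    (ENNReal.ofReal (r ^ (p - (N:ℝ))) * ω (ball x r)) ^ (1/(p-1)) / ENNReal.ofReal r

/-- Maximal fractional operator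
`M_{p,R}^η[ω](x) = sup_{0<r<R} ω(B(x,r)) / (r^{N-p} h_η(r))`,
where `h_η(r) = min((−ln r)^{−η}, (ln 2)^{−η})`. -/
noncomputable def maxFracOp (N : ℕ) (p R η : ℝ)
    (ω : Measure (EuclideanSpace ℝ (Fin N))) (x : EuclideanSpace ℝ (Fin N)) : ℝ≥0∞ :=
  ⨆ r ∈ Ioo (0:ℝ) R,
    ω (ball x r) /
      ENNReal.ofReal (r ^ ((N:ℝ) - p) * min ((-Real.log r) ^ (-η)) ((Real.log 2) ^ (-η)))

private lemma meas_term (N : ℕ) (p : ℝ) (μ : Measure (EuclideanSpace ℝ (Fin N)))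
    (x : EuclideanSpace ℝ (Fin N)) :
    Measurable fun r : ℝ =>
      (ENNReal.ofReal (r ^ (p - (N:ℝ))) * μ (ball x r)) ^ (1/(p-1)) / ENNReal.ofReal r := by
  have hmono : Monotone fun r : ℝ => μ (ball x r) :=
    fun a b hab => measure_mono (ball_subset_ball hab)
  have h1 : Measurable fun r : ℝ => ENNReal.ofReal (r ^ (p - (N:ℝ))) :=
    ENNReal.measurable_ofReal.comp (measurable_id.pow measurable_const)
  exact ((h1.mul hmono.measurable).pow measurable_const).div
    (ENNReal.measurable_ofReal.comp measurable_id)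

private lemma wolff_mono (N : ℕ) (p R : ℝ)
    (hp : 1 < p) {μ ν : Measure (EuclideanSpace ℝ (Fin N))} (h : μ ≤ ν)
    (x : EuclideanSpace ℝ (Fin N)) :
    wolffPotential N p R μ x ≤ wolffPotential N p R ν x := by
  refine lintegral_mono fun r => ?_
  gcongr

private lemma real_young (β β₀ ε : ℝ) (hβ : 0 ≤ β) (hββ₀ : β < β₀) (hε : 0 < ε)
    (A B : ℝ) (hA : 0 ≤ A) (hB : 0 ≤ B) :
    ∃ c : ℝ, 0 < c ∧ ∀ t : ℝ, 0 ≤ t → (A + B * t) ^ β ≤ c + ε * t ^ β₀ := by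
  set K := (A + B) ^ β with hK
  have hK0 : 0 ≤ K := Real.rpow_nonneg (by linarith) _
  set T := max 1 ((K / ε) ^ (β₀ - β)⁻¹) with hT
  have hT1 : 1 ≤ T := le_max_left _ _
  have hT0 : 0 < T := lt_of_lt_of_le one_pos hT1
  have hTβ : 0 ≤ T ^ β := Real.rpow_nonneg hT0.le _
  refine ⟨K * T ^ β + 1, by positivity, ?_⟩
  intro t ht
  rcases le_total t T with htT | hTt
  · have h1 : A + B * t ≤ (A + B) * T := by
      nlinarith [mul_nonneg hA (sub_nonneg.2 hT1), mul_nonneg hB (sub_nonneg.2 htT)]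
    have h2 : (A + B * t) ^ β ≤ ((A + B) * T) ^ β :=
      Real.rpow_le_rpow (by positivity) h1 hβ
    rw [Real.mul_rpow (by linarith) hT0.le] at h2
    have h3 : 0 ≤ ε * t ^ β₀ := by positivity
    linarith
  · have ht1 : (1:ℝ) ≤ t := hT1.trans hTt
    have ht0 : 0 < t := lt_of_lt_of_le one_pos ht1
    have h1 : A + B * t ≤ (A + B) * t := by
      nlinarith [mul_nonneg hA (sub_nonneg.2 ht1)]
    have h2 : (A + B * t) ^ β ≤ K * t ^ β := by
      have := Real.rpow_le_rpow (by positivity) h1 hβ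
      rwa [Real.mul_rpow (by linarith) ht0.le] at this
    have hδ : 0 < β₀ - β := by linarith
    have h3 : K / ε ≤ t ^ (β₀ - β) := by
      have h4 : (K / ε) ^ (β₀ - β)⁻¹ ≤ t := (le_max_right _ _).trans hTt
      have h5 := Real.rpow_le_rpow (by positivity) h4 hδ.le
      rwa [Real.rpow_inv_rpow (by positivity) hδ.ne'] at h5
    have h6 : K ≤ ε * t ^ (β₀ - β) := by rw [mul_comm]; exact (div_le_iff₀ hε).1 h3
    have h7 : K * t ^ β ≤ ε * t ^ β₀ := by
      have h8 : t ^ β₀ = t ^ (β₀ - β) * t ^ β := by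
        rw [← Real.rpow_add ht0]; ring_nf
      rw [h8, ← mul_assoc]
      exact mul_le_mul_of_nonneg_right h6 (Real.rpow_nonneg ht0.le _)
    have : 0 < K * T ^ β + 1 := by positivity
    linarith

private lemma wolff_smul_add_le (N : ℕ) (p R : ℝ) (hp : 1 < p) (n : ℕ)
    (μ ω : Measure (EuclideanSpace ℝ (Fin N))) (x : EuclideanSpace ℝ (Fin N)) :
    wolffPotential N p R ((n : ℝ≥0∞) • (μ + ω)) x ≤
      ((2 : ℝ≥0∞) * n) ^ (1/(p-1)) *
        (wolffPotential N p R μ x + wolffPotential N p R ω x) := by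
  have hq : (0:ℝ) ≤ 1/(p-1) := one_div_nonneg.2 (by linarith)
  have hC : ((2 : ℝ≥0∞) * n) ^ (1/(p-1)) ≠ ⊤ :=
    (ENNReal.rpow_lt_top_of_nonneg hq
      (ENNReal.mul_ne_top ENNReal.ofNat_ne_top (ENNReal.natCast_ne_top n))).ne
  unfold wolffPotential
  calc
    ∫⁻ r in Ioo (0:ℝ) R,
        (ENNReal.ofReal (r ^ (p - (N:ℝ))) * ((n : ℝ≥0∞) • (μ + ω)) (ball x r)) ^ (1/(p-1)) /
          ENNReal.ofReal r
      ≤ ∫⁻ r in Ioo (0:ℝ) R,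
        ((2 : ℝ≥0∞) * n) ^ (1/(p-1)) *
          ((ENNReal.ofReal (r ^ (p - (N:ℝ))) * μ (ball x r)) ^ (1/(p-1)) / ENNReal.ofReal r +
           (ENNReal.ofReal (r ^ (p - (N:ℝ))) * ω (ball x r)) ^ (1/(p-1)) / ENNReal.ofReal r) := by
        refine lintegral_mono fun r => ?_
        set X := ENNReal.ofReal (r ^ (p - (N:ℝ)))
        set a := μ (ball x r)
        set b := ω (ball x r)
        have happ : ((n : ℝ≥0∞) • (μ + ω)) (ball x r) = (n : ℝ≥0∞) * (a + b) := by
          simp [Measure.smul_apply, Measure.add_apply, smul_eq_mul, a, b, mul_add]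
        rw [happ]
        have h1 : X * ((n : ℝ≥0∞) * (a + b)) ≤ (2 * n) * (X * (a ⊔ b)) := by
          have hab : a + b ≤ 2 * (a ⊔ b) := by
            rw [two_mul]; exact add_le_add le_sup_left le_sup_right
          calc X * ((n : ℝ≥0∞) * (a + b)) ≤ X * ((n : ℝ≥0∞) * (2 * (a ⊔ b))) := by gcongr
            _ = (2 * n) * (X * (a ⊔ b)) := by ring
        have h2 : (X * (a ⊔ b)) ^ (1/(p-1)) ≤ (X * a) ^ (1/(p-1)) + (X * b) ^ (1/(p-1)) := by
          rcases le_total a b with h | h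
          · rw [sup_of_le_right h]; exact le_add_self
          · rw [sup_of_le_left h]; exact le_self_add
        calc (X * ((n : ℝ≥0∞) * (a + b))) ^ (1/(p-1)) / ENNReal.ofReal r
            ≤ ((2 * n) * (X * (a ⊔ b))) ^ (1/(p-1)) / ENNReal.ofReal r :=
              ENNReal.div_le_div_right (ENNReal.rpow_le_rpow h1 hq) _
          _ = ((2:ℝ≥0∞) * n) ^ (1/(p-1)) * (X * (a ⊔ b)) ^ (1/(p-1)) / ENNReal.ofReal r := by
              rw [ENNReal.mul_rpow_of_nonneg _ _ hq]
          _ ≤ ((2:ℝ≥0∞) * n) ^ (1/(p-1)) * ((X * a) ^ (1/(p-1)) + (X * b) ^ (1/(p-1))) /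
                ENNReal.ofReal r := by gcongr
          _ = ((2:ℝ≥0∞) * n) ^ (1/(p-1)) *
                ((X * a) ^ (1/(p-1)) / ENNReal.ofReal r +
                 (X * b) ^ (1/(p-1)) / ENNReal.ofReal r) := by
              rw [mul_div_assoc, ENNReal.add_div]
    _ = ((2 : ℝ≥0∞) * n) ^ (1/(p-1)) *
          (wolffPotential N p R μ x + wolffPotential N p R ω x) := by
        rw [lintegral_const_mul' _ _ hC, lintegral_add_left (meas_term N p μ x)]
        rfl

private lemma wolff_volume_translate (N : ℕ) (p R : ℝ) (x : EuclideanSpace ℝ (Fin N)) :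
    wolffPotential N p R volume x = wolffPotential N p R volume 0 := by
  unfold wolffPotential
  simp_rw [Measure.addHaar_ball_center volume x]

private lemma wolff_volume_lt_top (N : ℕ) (p R : ℝ) (hp : 1 < p) :
    wolffPotential N p R volume (0 : EuclideanSpace ℝ (Fin N)) < ⊤ := by
  have hp1 : (0:ℝ) < p - 1 := by linarith
  set q := 1/(p-1) with hqdef
  have hq : 0 < q := by positivity
  set R' := |R| + 1 with hR'def
  have hRR' : R ≤ R' := le_trans (le_abs_self R) (by simp [hR'def])
  have hmono : wolffPotential N p R volume (0 : EuclideanSpace ℝ (Fin N)) ≤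
      wolffPotential N p R' volume 0 :=
    lintegral_mono_set (Ioo_subset_Ioo le_rfl hRR')
  refine lt_of_le_of_lt hmono ?_
  set V := volume (ball (0 : EuclideanSpace ℝ (Fin N)) 1) with hVdef
  have hVtop : V ≠ ⊤ := measure_ball_lt_top.ne
  have key : ∀ r ∈ Ioo (0:ℝ) R',
      (ENNReal.ofReal (r ^ (p - (N:ℝ))) * volume (ball (0:EuclideanSpace ℝ (Fin N)) r)) ^ q /
        ENNReal.ofReal r = V ^ q * ENNReal.ofReal (r ^ (p * q - 1)) := by
    intro r hr
    obtain ⟨hr0, _⟩ := hr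
    rw [Measure.addHaar_ball_of_pos volume 0 hr0, finrank_euclideanSpace_fin,
      ← mul_assoc, ← ENNReal.ofReal_mul (Real.rpow_nonneg hr0.le _)]
    have e1 : r ^ (p - (N:ℝ)) * r ^ N = r ^ p := by
      rw [← Real.rpow_natCast r N, ← Real.rpow_add hr0]
      norm_num
    rw [e1, ENNReal.mul_rpow_of_nonneg _ _ hq.le,
      ENNReal.ofReal_rpow_of_pos (Real.rpow_pos_of_pos hr0 p), ← Real.rpow_mul hr0.le,
      mul_comm, mul_div_assoc, ← ENNReal.ofReal_div_of_pos hr0]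
    have e2 : r ^ (p * q) / r = r ^ (p * q - 1) := by
      rw [Real.rpow_sub hr0, Real.rpow_one]
    rw [e2]
  unfold wolffPotential
  rw [setLIntegral_congr_fun measurableSet_Ioo key,
    lintegral_const_mul' _ _ (ENNReal.rpow_ne_top_of_nonneg hq.le hVtop)]
  have hexp : (-1:ℝ) < p * q - 1 := by nlinarith
  have hInt : IntervalIntegrable (fun r : ℝ => r ^ (p * q - 1)) volume 0 R' :=
    intervalIntegral.intervalIntegrable_rpow' hexp
  have hIoo : IntegrableOn (fun r : ℝ => r ^ (p * q - 1)) (Ioo 0 R') volume :=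
    hInt.1.mono_set Ioo_subset_Ioc_self
  exact ENNReal.mul_lt_top
    (ENNReal.rpow_lt_top_of_nonneg hq.le hVtop) hIoo.setLIntegral_lt_top



/-- let `β₀ > β ≥ 1` and `κ > 0`. For every `ε > 0` and integer `n ≥ 1` there
is `c = c_{ε,n} > 0` (depending on `ε,n,N,p,β,β₀,κ,D`) such that, for every bounded domain
`Ω` of diameter `D` and every finite nonnegative measure `ω` supported in `Ω` whose Wolff
potential `W_{1,p}^{2D}[ω]` is finite a.e. in `Ω`,
`(n + κ W_{1,p}^{2D}[n(1_Ω dx + ω)](x))^β ≤ c_{ε,n} + ε W_{1,p}^{2D}[ω](x)^{β₀}`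
for a.e. `x ∈ Ω`. -/
theorem wolff_plus_lebesgue_pow_le' (N : ℕ) (p β β₀ κ D : ℝ)
    (hp : 1 < p) (hpN : p < N) (hβ : 1 ≤ β) (hββ₀ : β < β₀) (hκ : 0 < κ) :
    ∀ ε : ℝ, 0 < ε → ∀ n : ℕ, 1 ≤ n → ∃ c : ℝ, 0 < c ∧
      ∀ Ω : Set (EuclideanSpace ℝ (Fin N)),
        IsOpen Ω → IsConnected Ω → Bornology.IsBounded Ω → Metric.diam Ω = D →
        ∀ ω : Measure (EuclideanSpace ℝ (Fin N)), IsFiniteMeasure ω → ω Ωᶜ = 0 →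
          (∀ᵐ x ∂(volume.restrict Ω), wolffPotential N p (2 * D) ω x < ⊤) →
          ∀ᵐ x ∂(volume.restrict Ω),
            ((n : ℝ≥0∞) + ENNReal.ofReal κ *
                wolffPotential N p (2 * D) ((n : ℝ≥0∞) • (volume.restrict Ω + ω)) x) ^ β
              ≤ ENNReal.ofReal c + ENNReal.ofReal ε *
                  wolffPotential N p (2 * D) ω x ^ β₀ := by
  intro ε hε n hn
  have hp1 : (0:ℝ) < p - 1 := by linarith
  have hq : (0:ℝ) < 1/(p-1) := by positivity
  have hβ0 : (0:ℝ) ≤ β := by linarith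
  have hn1 : (1:ℝ) ≤ (n:ℝ) := by exact_mod_cast hn
  have h2n : (0:ℝ) < 2 * (n:ℝ) := by linarith
  set S := wolffPotential N p (2*D) volume (0 : EuclideanSpace ℝ (Fin N)) with hSdef
  have hS : S ≠ ⊤ := (wolff_volume_lt_top N p (2*D) hp).ne
  set s := S.toReal with hsdef
  have hs : 0 ≤ s := ENNReal.toReal_nonneg
  set M := (2*(n:ℝ)) ^ (1/(p-1)) with hMdef
  have hM : 0 ≤ M := Real.rpow_nonneg h2n.le _
  set A := (n:ℝ) + κ * (M * s) with hAdef
  set B := κ * M with hBdef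
  have hA : 0 ≤ A := add_nonneg (n.cast_nonneg) (mul_nonneg hκ.le (mul_nonneg hM hs))
  have hB : 0 ≤ B := mul_nonneg hκ.le hM
  obtain ⟨c, hc, hc2⟩ := real_young β β₀ ε hβ0 hββ₀ hε A B hA hB
  refine ⟨c, hc, ?_⟩
  intro Ω _ _ _ _ ω _ _ hae
  filter_upwards [hae] with x hx
  set W := wolffPotential N p (2*D) ω x with hWdef
  set t := W.toReal with htdef
  have ht : 0 ≤ t := ENNReal.toReal_nonneg
  have hWt : W = ENNReal.ofReal t := (ENNReal.ofReal_toReal hx.ne).symm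
  have hb1 : wolffPotential N p (2*D) ((n:ℝ≥0∞) • (volume.restrict Ω + ω)) x ≤
      ((2:ℝ≥0∞) * n) ^ (1/(p-1)) * (S + W) := by
    refine (wolff_smul_add_le N p (2*D) hp n _ _ x).trans ?_
    gcongr
    calc wolffPotential N p (2*D) (volume.restrict Ω) x
        ≤ wolffPotential N p (2*D) volume x :=
          wolff_mono N p (2*D) hp Measure.restrict_le_self x
      _ = S := wolff_volume_translate N p (2*D) x
  have e1 : ((2:ℝ≥0∞) * n) ^ (1/(p-1)) * (S + W) = ENNReal.ofReal (M * (s + t)) := by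
    have e2 : ((2:ℝ≥0∞) * (n:ℝ≥0∞)) = ENNReal.ofReal (2 * (n:ℝ)) := by
      rw [ENNReal.ofReal_mul (by norm_num)]
      simp [ENNReal.ofReal_natCast]
    rw [e2, ENNReal.ofReal_rpow_of_pos h2n, hWt, ← ENNReal.ofReal_toReal hS,
      ← ENNReal.ofReal_add hs ht, ← ENNReal.ofReal_mul hM]
  have hL : ((n : ℝ≥0∞) + ENNReal.ofReal κ *
        wolffPotential N p (2*D) ((n:ℝ≥0∞) • (volume.restrict Ω + ω)) x) ^ β
      ≤ ENNReal.ofReal ((A + B * t) ^ β) := by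
    have h2 : (n : ℝ≥0∞) + ENNReal.ofReal κ *
        wolffPotential N p (2*D) ((n:ℝ≥0∞) • (volume.restrict Ω + ω)) x
        ≤ ENNReal.ofReal (A + B * t) := by
      calc (n : ℝ≥0∞) + ENNReal.ofReal κ *
            wolffPotential N p (2*D) ((n:ℝ≥0∞) • (volume.restrict Ω + ω)) x
          ≤ (n : ℝ≥0∞) + ENNReal.ofReal κ * (((2:ℝ≥0∞) * n) ^ (1/(p-1)) * (S + W)) := by
            gcongr
        _ = ENNReal.ofReal (A + B * t) := by
            rw [e1, ← ENNReal.ofReal_mul hκ.le, ← ENNReal.ofReal_natCast n,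
              ← ENNReal.ofReal_add (n.cast_nonneg)
                (mul_nonneg hκ.le (mul_nonneg hM (add_nonneg hs ht)))]
            congr 1
            rw [hAdef, hBdef]; ring
    calc ((n : ℝ≥0∞) + ENNReal.ofReal κ *
          wolffPotential N p (2*D) ((n:ℝ≥0∞) • (volume.restrict Ω + ω)) x) ^ β
        ≤ (ENNReal.ofReal (A + B * t)) ^ β := ENNReal.rpow_le_rpow h2 hβ0
      _ = ENNReal.ofReal ((A + B * t) ^ β) :=
          ENNReal.ofReal_rpow_of_nonneg (by positivity) hβ0
  refine hL.trans ?_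
  have hR : ENNReal.ofReal c + ENNReal.ofReal ε * W ^ β₀ =
      ENNReal.ofReal (c + ε * t ^ β₀) := by
    rw [hWt, ENNReal.ofReal_rpow_of_nonneg ht (by linarith), ← ENNReal.ofReal_mul hε.le,
      ← ENNReal.ofReal_add hc.le (by positivity)]
  rw [hR]
  exact ENNReal.ofReal_le_ofReal (hc2 t ht)
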